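/- Let C be a d×n real matrix with columns c_1,...,c_n satisfying ‖CᵀC − Id_n‖ ≤ δ for some δ ≤ 1. Let V ⊆ ℝ^{d^2} be the span of the vectors c_1^{⊗2},...,c_n^{⊗2}, and let Id_V be the orthogonal projection onto V. Then ‖∑_{i=1}^n c_i^{⊗2}(c_i^{⊗2})ᵀ − Id_V‖ ≤ 3δ. -/

import Mathlib

open scoped BigOperators Matrix
open scoped RealInnerProductSpace

section Helpers

lemma selfAdj_norm_le' {E : Type*} [NormedAddCommGroup E] [InnerProductSpace ℝ E]
    (A : E →L[ℝ] E) (c : ℝ) (hc : 0 ≤ c)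
    (hsym : ∀ x y : E, ⟪A x, y⟫ = ⟪x, A y⟫)
    (h : ∀ x : E, |⟪A x, x⟫| ≤ c * ‖x‖ ^ 2) : ‖A‖ ≤ c := by
  refine A.opNorm_le_bound hc fun x => ?_
  by_cases hx : ‖A x‖ = 0
  · rw [hx]; positivity
  have hAx : 0 < ‖A x‖ := lt_of_le_of_ne (norm_nonneg _) (Ne.symm hx)
  have hx0 : x ≠ 0 := by rintro rfl; simp at hx
  have hxn : 0 < ‖x‖ := norm_pos_iff.mpr hx0
  set y := (‖x‖ / ‖A x‖) • A x with hy
  have hyn : ‖y‖ = ‖x‖ := by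
    rw [hy, norm_smul, Real.norm_eq_abs, abs_div, abs_of_nonneg (norm_nonneg x),
      abs_of_nonneg (norm_nonneg (A x)), div_mul_cancel₀]
    exact hx
  have hAyx : ⟪A y, x⟫ = ⟪A x, y⟫ := by rw [hsym y x, real_inner_comm]
  have hAxy : ⟪A x, y⟫ = ‖x‖ * ‖A x‖ := by
    rw [hy, real_inner_smul_right, real_inner_self_eq_norm_sq]
    field_simp
  have e1 : ⟪A (x + y), x + y⟫ - ⟪A (x - y), x - y⟫ = 4 * (‖x‖ * ‖A x‖) := by
    simp only [map_add, map_sub, inner_add_left, inner_add_right, inner_sub_left, inner_sub_right]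
    rw [hAyx, hAxy]
    ring
  have e2 : ⟪A (x + y), x + y⟫ - ⟪A (x - y), x - y⟫ ≤ c * ‖x + y‖ ^ 2 + c * ‖x - y‖ ^ 2 := by
    have h1 := h (x + y)
    have h2 := h (x - y)
    linarith [(abs_le.mp h1).2, (abs_le.mp h2).1]
  have e3 : ‖x + y‖ ^ 2 + ‖x - y‖ ^ 2 = 2 * (‖x‖ * ‖x‖) + 2 * (‖y‖ * ‖y‖) := by
    have := parallelogram_law_with_norm ℝ x y
    nlinarith [this]
  have : 4 * (‖x‖ * ‖A x‖) ≤ 4 * (c * ‖x‖ ^ 2) := by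
    rw [← e1]
    calc ⟪A (x + y), x + y⟫ - ⟪A (x - y), x - y⟫ ≤ c * ‖x + y‖ ^ 2 + c * ‖x - y‖ ^ 2 := e2
    _ = c * (‖x + y‖ ^ 2 + ‖x - y‖ ^ 2) := by ring
    _ = 4 * (c * ‖x‖ ^ 2) := by rw [e3, hyn]; ring
  nlinarith [hxn]

lemma key_quad_bound {n : ℕ} {δ : ℝ} (hδ0 : 0 ≤ δ) {D : Type*} [Fintype D]
    (t : Fin n → EuclideanSpace ℝ D) (G Em : Fin n → Fin n → ℝ)
    (hg : ∀ i j, ⟪t i, t j⟫ = (G i j) ^ 2)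
    (hEm : ∀ i j, G i j = Em i j + (if i = j then 1 else 0))
    (hsymm : ∀ i j, Em i j = Em j i)
    (hcol : ∀ j, ∑ i, Em i j ^ 2 ≤ δ ^ 2)
    (x : Fin n → ℝ) :
    |‖∑ i, x i • t i‖ ^ 2 - ∑ i, x i ^ 2| ≤ (2 * δ + δ ^ 2) * ∑ i, x i ^ 2 := by
  have hx2 : (0:ℝ) ≤ ∑ i, x i ^ 2 := Finset.sum_nonneg fun i _ => sq_nonneg _
  have h1 : ‖∑ i, x i • t i‖ ^ 2 = ∑ i, ∑ j, x i * x j * (G i j) ^ 2 := by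
    rw [← real_inner_self_eq_norm_sq, sum_inner]
    refine Finset.sum_congr rfl fun i _ => ?_
    rw [inner_sum]
    refine Finset.sum_congr rfl fun j _ => ?_
    rw [real_inner_smul_left, real_inner_smul_right, hg]
    ring
  have hterm : ∀ i j, x i * x j * (G i j) ^ 2
      = x i * x j * (Em i j) ^ 2 + (if j = i then x i ^ 2 * (2 * Em i i + 1) else 0) := by
    intro i j
    by_cases h : j = i
    · subst h
      rw [hEm j j]
      simp
      ring
    · rw [hEm i j, if_neg (fun hh => h hh.symm), if_neg h]
      ring
  have h2 : ‖∑ i, x i • t i‖ ^ 2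
      = (∑ i, ∑ j, x i * x j * (Em i j) ^ 2) + ((∑ i, x i ^ 2 * (2 * Em i i)) + ∑ i, x i ^ 2) := by
    rw [h1]
    simp_rw [hterm, Finset.sum_add_distrib, Finset.sum_ite_eq' Finset.univ]
    simp only [Finset.mem_univ, if_true]
    rw [Finset.sum_congr rfl
      (fun i _ => (by ring : x i ^ 2 * (2 * Em i i + 1) = x i ^ 2 * (2 * Em i i) + x i ^ 2)),
      Finset.sum_add_distrib]
  have hdiag : ∀ i, |Em i i| ≤ δ := by
    intro i
    have h1 : Em i i ^ 2 ≤ δ ^ 2 := by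
      refine le_trans ?_ (hcol i)
      exact Finset.single_le_sum (fun k _ => sq_nonneg (Em k i)) (Finset.mem_univ i)
    calc |Em i i| = Real.sqrt (Em i i ^ 2) := (Real.sqrt_sq_eq_abs _).symm
      _ ≤ Real.sqrt (δ ^ 2) := Real.sqrt_le_sqrt h1
      _ = δ := by rw [Real.sqrt_sq hδ0]
  have hD : |∑ i, x i ^ 2 * (2 * Em i i)| ≤ 2 * δ * ∑ i, x i ^ 2 := by
    calc |∑ i, x i ^ 2 * (2 * Em i i)| ≤ ∑ i, |x i ^ 2 * (2 * Em i i)| :=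
        Finset.abs_sum_le_sum_abs _ _
      _ ≤ ∑ i, x i ^ 2 * (2 * δ) := by
          refine Finset.sum_le_sum fun i _ => ?_
          rw [abs_mul, abs_mul, abs_sq, abs_two]
          have h := hdiag i
          have h2 := abs_nonneg (Em i i)
          nlinarith [sq_nonneg (x i)]
      _ = 2 * δ * ∑ i, x i ^ 2 := by rw [← Finset.sum_mul]; ring
  have hrow : ∀ i, ∑ j, Em i j ^ 2 ≤ δ ^ 2 := by
    intro i
    calc ∑ j, Em i j ^ 2 = ∑ j, Em j i ^ 2 := by
          refine Finset.sum_congr rfl fun j _ => by rw [hsymm]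
      _ ≤ δ ^ 2 := hcol i
  have hH : |∑ i, ∑ j, x i * x j * (Em i j) ^ 2| ≤ δ ^ 2 * ∑ i, x i ^ 2 := by
    have hprod : ∑ i, ∑ j, x i * x j * (Em i j) ^ 2
        = ∑ p : Fin n × Fin n, (x p.1 * Em p.1 p.2) * (x p.2 * Em p.1 p.2) := by
      rw [Fintype.sum_prod_type]
      exact Finset.sum_congr rfl fun i _ => Finset.sum_congr rfl fun j _ => by ring
    have hf : ∑ p : Fin n × Fin n, (x p.1 * Em p.1 p.2) ^ 2 ≤ δ ^ 2 * ∑ i, x i ^ 2 := by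
      rw [Fintype.sum_prod_type]
      calc ∑ i, ∑ j, (x i * Em i j) ^ 2 = ∑ i, x i ^ 2 * ∑ j, Em i j ^ 2 := by
            refine Finset.sum_congr rfl fun i _ => ?_
            rw [Finset.mul_sum]
            exact Finset.sum_congr rfl fun j _ => by ring
        _ ≤ ∑ i, x i ^ 2 * δ ^ 2 := Finset.sum_le_sum fun i _ =>
            mul_le_mul_of_nonneg_left (hrow i) (sq_nonneg _)
        _ = δ ^ 2 * ∑ i, x i ^ 2 := by rw [← Finset.sum_mul]; ring
    have hgg : ∑ p : Fin n × Fin n, (x p.2 * Em p.1 p.2) ^ 2 ≤ δ ^ 2 * ∑ i, x i ^ 2 := by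
      rw [Fintype.sum_prod_type]
      calc ∑ i, ∑ j, (x j * Em i j) ^ 2 = ∑ j, ∑ i, (x j * Em i j) ^ 2 := Finset.sum_comm
        _ = ∑ j, x j ^ 2 * ∑ i, Em i j ^ 2 := by
            refine Finset.sum_congr rfl fun j _ => ?_
            rw [Finset.mul_sum]
            exact Finset.sum_congr rfl fun i _ => by ring
        _ ≤ ∑ j, x j ^ 2 * δ ^ 2 := Finset.sum_le_sum fun j _ =>
            mul_le_mul_of_nonneg_left (hcol j) (sq_nonneg _)
        _ = δ ^ 2 * ∑ i, x i ^ 2 := by rw [← Finset.sum_mul]; ring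
    have hcs := Finset.sum_mul_sq_le_sq_mul_sq Finset.univ
      (fun p : Fin n × Fin n => x p.1 * Em p.1 p.2) (fun p => x p.2 * Em p.1 p.2)
    have hsq : (∑ i, ∑ j, x i * x j * (Em i j) ^ 2) ^ 2 ≤ (δ ^ 2 * ∑ i, x i ^ 2) ^ 2 := by
      rw [hprod]
      calc (∑ p : Fin n × Fin n, (x p.1 * Em p.1 p.2) * (x p.2 * Em p.1 p.2)) ^ 2
          ≤ (∑ p : Fin n × Fin n, (x p.1 * Em p.1 p.2) ^ 2)
            * ∑ p : Fin n × Fin n, (x p.2 * Em p.1 p.2) ^ 2 := hcs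
        _ ≤ (δ ^ 2 * ∑ i, x i ^ 2) ^ 2 := by
            have h1 : (0:ℝ) ≤ ∑ p : Fin n × Fin n, (x p.1 * Em p.1 p.2) ^ 2 :=
              Finset.sum_nonneg fun p _ => sq_nonneg _
            have h2 : (0:ℝ) ≤ ∑ p : Fin n × Fin n, (x p.2 * Em p.1 p.2) ^ 2 :=
              Finset.sum_nonneg fun p _ => sq_nonneg _
            nlinarith [hf, hgg]
    have hnn : (0:ℝ) ≤ δ ^ 2 * ∑ i, x i ^ 2 := mul_nonneg (sq_nonneg _) hx2
    calc |∑ i, ∑ j, x i * x j * (Em i j) ^ 2|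
        = Real.sqrt ((∑ i, ∑ j, x i * x j * (Em i j) ^ 2) ^ 2) := (Real.sqrt_sq_eq_abs _).symm
      _ ≤ Real.sqrt ((δ ^ 2 * ∑ i, x i ^ 2) ^ 2) := Real.sqrt_le_sqrt hsq
      _ = δ ^ 2 * ∑ i, x i ^ 2 := Real.sqrt_sq hnn
  rw [h2]
  have habs : |(∑ i, ∑ j, x i * x j * Em i j ^ 2) + ∑ i, x i ^ 2 * (2 * Em i i)|
      ≤ δ ^ 2 * ∑ i, x i ^ 2 + 2 * δ * ∑ i, x i ^ 2 := le_trans (abs_add_le _ _) (add_le_add hH hD)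
  calc |(∑ i, ∑ j, x i * x j * Em i j ^ 2) + ((∑ i, x i ^ 2 * (2 * Em i i)) + ∑ i, x i ^ 2)
        - ∑ i, x i ^ 2|
      = |(∑ i, ∑ j, x i * x j * Em i j ^ 2) + ∑ i, x i ^ 2 * (2 * Em i i)| := by ring_nf
    _ ≤ δ ^ 2 * ∑ i, x i ^ 2 + 2 * δ * ∑ i, x i ^ 2 := habs
    _ = (2 * δ + δ ^ 2) * ∑ i, x i ^ 2 := by ring

lemma aux_sq_le (a b : ℝ) (ha : 0 ≤ a) (hb : 0 ≤ b) (h : a ^ 2 ≤ a * b) : a ^ 2 ≤ b ^ 2 := by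
  nlinarith [sq_nonneg (a - b)]

lemma aux_final (δ s Q X : ℝ) (hδ0 : 0 ≤ δ) (hs0 : 0 ≤ s)
    (hupper : Q - s ≤ 3 * δ * s) (hlower : s - Q ≤ 3 * δ * s) (hsx : s ≤ X) :
    |Q - s| ≤ 3 * δ * X := by
  rw [abs_le]
  constructor <;> nlinarith

end Helpers

/-- Spectral (operator) norm of a real matrix. -/
noncomputable def specNorm {m n : Type*} [Fintype m] [Fintype n] [DecidableEq n]
    (A : Matrix m n ℝ) : ℝ :=
  ‖LinearMap.toContinuousLinearMap (Matrix.toEuclideanLin A)‖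

set_option maxHeartbeats 1000000 in
theorem stmt_9 (d n : ℕ) (δ : ℝ) (hδ : δ ≤ 1)
    (C : Matrix (Fin d) (Fin n) ℝ)
    (hC : specNorm (Cᵀ * C - 1) ≤ δ)
    (t : Fin n → EuclideanSpace ℝ (Fin d × Fin d))
    (ht : ∀ i, ∀ p : Fin d × Fin d, t i p = C p.1 i * C p.2 i)
    (V : Submodule ℝ (EuclideanSpace ℝ (Fin d × Fin d)))
    (hV : V = Submodule.span ℝ (Set.range t)) :
    ‖(∑ i, (innerSL ℝ (t i)).smulRight (t i))
        - V.subtypeL.comp (V.orthogonalProjection)‖ ≤ 3 * δ := by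
  have hδ0 : 0 ≤ δ := le_trans (norm_nonneg _) hC
  set G : Fin n → Fin n → ℝ := fun i j => ∑ p, C p i * C p j with hGdef
  set Em : Fin n → Fin n → ℝ := fun i j => G i j - (if i = j then 1 else 0) with hEmdef
  -- column bound
  have hcol : ∀ j, ∑ i, Em i j ^ 2 ≤ δ ^ 2 := by
    intro j
    set A := Cᵀ * C - 1 with hA
    set L := LinearMap.toContinuousLinearMap (Matrix.toEuclideanLin A) with hL
    set x : EuclideanSpace ℝ (Fin n) := EuclideanSpace.single j 1 with hx
    have hxn : ‖x‖ = 1 := by simp [hx, EuclideanSpace.norm_single]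
    have hb : ‖L x‖ ≤ δ := by
      calc ‖L x‖ ≤ ‖L‖ * ‖x‖ := L.le_opNorm x
      _ ≤ δ * 1 := by rw [hxn]; exact mul_le_mul_of_nonneg_right hC zero_le_one
      _ = δ := mul_one δ
    have happ : ∀ i, L x i = A i j := by
      intro i
      show Matrix.toEuclideanLin A x i = A i j
      rw [Matrix.toEuclideanLin_apply]
      show (A *ᵥ (WithLp.equiv 2 (Fin n → ℝ)) x) i = A i j
      rw [hx]
      show (A *ᵥ (WithLp.equiv 2 (Fin n → ℝ))
        ((WithLp.equiv 2 (Fin n → ℝ)).symm (Pi.single j 1))) i = A i j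
      rw [Equiv.apply_symm_apply, Matrix.mulVec_single]
      simp
    have hsq : ∑ i, (L x i) ^ 2 = ‖L x‖ ^ 2 := by
      rw [← real_inner_self_eq_norm_sq]
      simp only [PiLp.inner_apply, RCLike.inner_apply, conj_trivial, sq]
    have hAij : ∀ i, A i j = Em i j := by
      intro i
      simp [hA, hEmdef, hGdef, Matrix.sub_apply, Matrix.mul_apply, Matrix.one_apply,
        Matrix.transpose_apply]
    calc ∑ i, Em i j ^ 2 = ∑ i, (L x i) ^ 2 := by simp_rw [happ, hAij]
      _ = ‖L x‖ ^ 2 := hsq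
      _ ≤ δ ^ 2 := by nlinarith [norm_nonneg (L x)]
  have hsymm : ∀ i j, Em i j = Em j i := by
    intro i j
    simp only [hEmdef, hGdef]
    congr 1
    · exact Finset.sum_congr rfl fun p _ => mul_comm _ _
    · simp [eq_comm]
  have hg : ∀ i j, ⟪t i, t j⟫ = (G i j) ^ 2 := by
    intro i j
    have : ⟪t i, t j⟫ = ∑ p : Fin d × Fin d, t i p * t j p := by
      simp [PiLp.inner_apply, RCLike.inner_apply]
      exact Finset.sum_congr rfl fun p _ => mul_comm _ _
    rw [this]
    simp_rw [ht]
    rw [hGdef]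
    rw [sq, Finset.sum_mul_sum]
    rw [Fintype.sum_prod_type]
    exact Finset.sum_congr rfl fun a _ => Finset.sum_congr rfl fun b _ => by ring
  have hEm : ∀ i j, G i j = Em i j + (if i = j then 1 else 0) := by
    intro i j; simp [hEmdef]
  have hkey := fun x => key_quad_bound hδ0 t G Em hg hEm hsymm hcol x
  set β := 2 * δ + δ ^ 2 with hβdef
  have hβ0 : 0 ≤ β := by positivity
  have hβ3 : β ≤ 3 * δ := by nlinarith
  set T := ∑ i, (innerSL ℝ (t i)).smulRight (t i) with hT
  set P := V.subtypeL.comp (V.orthogonalProjection) with hP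
  have hTapp : ∀ x, T x = ∑ i, ⟪t i, x⟫ • t i := by
    intro x
    rw [hT, ContinuousLinearMap.sum_apply]
    exact Finset.sum_congr rfl fun i _ => rfl
  have hPapp : ∀ x, P x = (V.orthogonalProjection x : EuclideanSpace ℝ (Fin d × Fin d)) :=
    fun x => rfl
  have htV : ∀ i, t i ∈ V := fun i => hV ▸ Submodule.subset_span ⟨i, rfl⟩
  refine selfAdj_norm_le' (T - P) (3 * δ) (by positivity) ?_ ?_
  · -- symmetry
    intro x y
    simp only [ContinuousLinearMap.sub_apply, inner_sub_left, inner_sub_right]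
    congr 1
    · rw [hTapp, hTapp, sum_inner, inner_sum]
      refine Finset.sum_congr rfl fun i _ => ?_
      rw [real_inner_smul_left, real_inner_smul_right, real_inner_comm x (t i)]
      ring
    · show ⟪(P : _ →ₗ[ℝ] _) x, y⟫ = ⟪x, (P : _ →ₗ[ℝ] _) y⟫
      exact V.starProjection_isSymmetric x y
  · -- quadratic bound
    intro x
    set v := (↑(V.orthogonalProjection x) : EuclideanSpace ℝ (Fin d × Fin d)) with hv
    have hvV : v ∈ V := SetLike.coe_mem _
    have hw : x - v ∈ Vᗮ := V.sub_starProjection_mem_orthogonal x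
    have horth : ∀ u, u ∈ V → ⟪u, x - v⟫ = 0 :=
      fun u hu => (Submodule.mem_orthogonal V (x - v)).mp hw u hu
    have hti : ∀ i, ⟪t i, x⟫ = ⟪t i, v⟫ := by
      intro i
      have h0 := horth (t i) (htV i)
      rw [inner_sub_right] at h0
      linarith
    set b : Fin n → ℝ := fun i => ⟪t i, v⟫ with hb
    set Q := ∑ i, b i ^ 2 with hQ
    set s := ‖v‖ ^ 2 with hs
    have hs0 : 0 ≤ s := by positivity
    have hQ0 : 0 ≤ Q := Finset.sum_nonneg fun i _ => sq_nonneg _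
    have hTxx : ⟪T x, x⟫ = Q := by
      rw [hTapp, sum_inner]
      refine Finset.sum_congr rfl fun i _ => ?_
      rw [real_inner_smul_left, hti i, sq]
    have hPxx : ⟪P x, x⟫ = s := by
      rw [hPapp]
      have h0 := horth v hvV
      rw [inner_sub_right] at h0
      have : ⟪v, x⟫ = ⟪v, v⟫ := by linarith
      rw [← hv] at *
      rw [this, real_inner_self_eq_norm_sq, hs]
    have hAxx : ⟪(T - P) x, x⟫ = Q - s := by
      rw [ContinuousLinearMap.sub_apply, inner_sub_left, hTxx, hPxx]
    rw [hAxx]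
    -- get coefficients a
    have hvspan : v ∈ Submodule.span ℝ (Set.range t) := hV ▸ hvV
    obtain ⟨a, ha⟩ := Submodule.mem_span_range_iff_exists_fun ℝ |>.mp hvspan
    have hsab : s = ∑ i, a i * b i := by
      rw [hs, ← real_inner_self_eq_norm_sq]
      nth_rewrite 1 [← ha]
      rw [sum_inner]
      exact Finset.sum_congr rfl fun i _ => by rw [real_inner_smul_left]
    have Ka : |s - ∑ i, a i ^ 2| ≤ β * ∑ i, a i ^ 2 := by
      have := hkey a
      rw [ha] at this
      rw [hs]
      exact this
    set Rb : EuclideanSpace ℝ (Fin d × Fin d) := ∑ i, b i • t i with hRb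
    have Kb : |‖Rb‖ ^ 2 - Q| ≤ β * Q := hkey b
    have hQvRb : Q = ⟪v, Rb⟫ := by
      rw [hRb, inner_sum, hQ]
      refine Finset.sum_congr rfl fun i _ => ?_
      rw [real_inner_smul_right, real_inner_comm (t i) v]
      simp only [hb, sq]
    have ha2 : (0:ℝ) ≤ ∑ i, a i ^ 2 := Finset.sum_nonneg fun i _ => sq_nonneg _
    -- upper bound : Q - s ≤ 3δ s
    have hupper : Q - s ≤ 3 * δ * s := by
      rcases eq_or_lt_of_le hQ0 with hQz | hQpos
      · nlinarith
      · have h1 : Q ≤ ‖v‖ * ‖Rb‖ := hQvRb ▸ real_inner_le_norm v Rb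
        have h2 : ‖Rb‖ ^ 2 ≤ (1 + β) * Q := by
          have := (abs_le.mp Kb).2
          nlinarith
        have h3 : Q ^ 2 ≤ s * ((1 + β) * Q) := by
          have hnv : 0 ≤ ‖v‖ := norm_nonneg _
          have hnRb : 0 ≤ ‖Rb‖ := norm_nonneg _
          nlinarith
        have h4 : Q ≤ (1 + β) * s := by nlinarith
        nlinarith
    -- lower bound : s - Q ≤ 3δ s
    have hlower : s - Q ≤ 3 * δ * s := by
      by_cases h13 : 1 ≤ 3 * δ
      · nlinarith
      · push_neg at h13
        have hβ1 : β < 1 := lt_of_le_of_lt hβ3 h13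
        have hcs := Finset.sum_mul_sq_le_sq_mul_sq Finset.univ a b
        have hab2 : s ^ 2 ≤ (∑ i, a i ^ 2) * Q := by
          rw [hsab, hQ]
          exact hcs
        have hKa' : (1 - β) * (∑ i, a i ^ 2) ≤ s := by
          have := (abs_le.mp Ka).1
          nlinarith
        rcases eq_or_lt_of_le hs0 with hsz | hspos
        · nlinarith
        · have h5 : (1 - β) * s ^ 2 ≤ s * Q := by nlinarith
          have h6 : (1 - β) * s ≤ Q := by nlinarith
          nlinarith
    -- combine
    have hvxi : s = ⟪v, x⟫ := by
      have h0 := horth v hvV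
      rw [inner_sub_right] at h0
      rw [hs, ← real_inner_self_eq_norm_sq]
      linarith
    have hsx : s ≤ ‖x‖ ^ 2 := by
      have h1 : s ≤ ‖v‖ * ‖x‖ := hvxi ▸ real_inner_le_norm v x
      rw [hs] at h1 ⊢
      exact aux_sq_le _ _ (norm_nonneg v) (norm_nonneg x) h1
    exact aux_final δ s Q (‖x‖ ^ 2) hδ0 hs0 hupper hlower hsx
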